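/- Let φ be a continuous flow on a compact metric space M with nonwandering set consisting of finitely many critical elements, and suppose φ has the oriented shadowing property. Then φ has no cycles: there is no finite sequence of critical elements Λ₀ ⇀ Λ₁ ⇀ ⋯ ⇀ Λₖ = Λ₀ (k ≥ 1), where Λ ⇀ Λ' means Wᵘ(Λ) ∩ Wˢ(Λ') \ Ω(φ) ≠ ∅. -/

import Mathlib

open Set Filter Metric Topology

/-- A continuous flow on `M`. -/
def IsFlow {M : Type*} [TopologicalSpace M] (φ : ℝ × M → M) : Prop :=
  Continuous φ ∧ (∀ x, φ (0, x) = x) ∧ ∀ s t x, φ (s + t, x) = φ (s, φ (t, x))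

/-- Orientation preserving homeomorphism of `ℝ`. -/
def IsRep (f : ℝ → ℝ) : Prop :=
  Continuous f ∧ Function.Bijective f ∧ StrictMono f

/-- Element of `Rep(ε)`: all difference quotients within `ε` of `1`. -/
def IsRepE (ε : ℝ) (f : ℝ → ℝ) : Prop :=
  IsRep f ∧ ∀ a b : ℝ, b < a → |(f a - f b) / (a - b) - 1| < ε

/-- A `d`-pseudotrajectory of the flow `φ`. -/
def IsPseudo {M : Type*} [PseudoMetricSpace M] (φ : ℝ × M → M) (d : ℝ) (ξ : ℝ → M) : Prop :=
  ∀ t : ℝ, ∀ s ∈ Set.Icc (0:ℝ) 1, dist (ξ (t + s)) (φ (s, ξ t)) < d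

/-- The standard shadowing property. -/
def StandardShadowing {M : Type*} [PseudoMetricSpace M] (φ : ℝ × M → M) : Prop :=
  ∀ ε > 0, ∃ d > 0, ∀ ξ : ℝ → M, IsPseudo φ d ξ →
    ∃ x : M, ∃ h : ℝ → ℝ, IsRepE ε h ∧ ∀ t, dist (ξ t) (φ (h t, x)) < ε

/-- The oriented shadowing property. -/
def OrientedShadowing {M : Type*} [PseudoMetricSpace M] (φ : ℝ × M → M) : Prop :=
  ∀ ε > 0, ∃ d > 0, ∀ ξ : ℝ → M, IsPseudo φ d ξ →
    ∃ x : M, ∃ h : ℝ → ℝ, IsRep h ∧ ∀ t, dist (ξ t) (φ (h t, x)) < ε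

/-- A singularity (fixed point) of the flow. -/
def IsSingularity {M : Type*} (φ : ℝ × M → M) (p : M) : Prop :=
  ∀ t : ℝ, φ (t, p) = p

/-- A closed (periodic, non-fixed) orbit of the flow. -/
def IsClosedOrbit {M : Type*} (φ : ℝ × M → M) (Λ : Set M) : Prop :=
  ∃ (x₀ : M) (T : ℝ), 0 < T ∧ φ (T, x₀) = x₀ ∧ (∀ t ∈ Set.Ioo 0 T, φ (t, x₀) ≠ x₀) ∧
    Λ = Set.range (fun t : ℝ => φ (t, x₀))

/-- A critical element: a singularity or a closed orbit. -/
def IsCriticalElement {M : Type*} (φ : ℝ × M → M) (Λ : Set M) : Prop :=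
  (∃ p, IsSingularity φ p ∧ Λ = {p}) ∨ IsClosedOrbit φ Λ

/-- A nonwandering point of the flow. -/
def IsNonWandering {M : Type*} [TopologicalSpace M] (φ : ℝ × M → M) (x : M) : Prop :=
  ∀ V : Set M, IsOpen V → x ∈ V → ∀ T > 0, ∃ t > T, ∃ y ∈ V, φ (t, y) ∈ V

/-- The ω-limit set of a point. -/
def OmegaLim {M : Type*} [PseudoMetricSpace M] (φ : ℝ × M → M) (x : M) : Set M :=
  {y | ∀ ε > 0, ∀ T : ℝ, ∃ t > T, dist (φ (t, x)) y < ε}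

/-- The α-limit set of a point. -/
def AlphaLim {M : Type*} [PseudoMetricSpace M] (φ : ℝ × M → M) (x : M) : Set M :=
  {y | ∀ ε > 0, ∀ T : ℝ, ∃ t < T, dist (φ (t, x)) y < ε}

/-- Asymptotic stability of a compact invariant set `K`. -/
def IsAsympStable {M : Type*} [MetricSpace M] (φ : ℝ × M → M) (K : Set M) : Prop :=
  ∀ V : Set M, IsOpen V → K ⊆ V → ∃ U : Set M, IsOpen U ∧ K ⊆ U ∧ ∀ x ∈ U,
    (∀ t ≥ (0:ℝ), φ (t, x) ∈ V) ∧
    Tendsto (fun t => Metric.infDist (φ (t, x)) K) atTop (nhds 0)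

/-- Backward asymptotic stability of a compact invariant set `K`. -/
def IsBackAsympStable {M : Type*} [MetricSpace M] (φ : ℝ × M → M) (K : Set M) : Prop :=
  ∀ V : Set M, IsOpen V → K ⊆ V → ∃ U : Set M, IsOpen U ∧ K ⊆ U ∧ ∀ x ∈ U,
    (∀ t ≤ (0:ℝ), φ (t, x) ∈ V) ∧
    Tendsto (fun t => Metric.infDist (φ (t, x)) K) atBot (nhds 0)

section NCAux
variable {M : Type*} [MetricSpace M] [CompactSpace M] {φ : ℝ × M → M}

lemma nc_uc (hφ : IsFlow φ) {d : ℝ} (hd : 0 < d) (a b : ℝ) :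
    ∃ δ > 0, ∀ u ∈ Icc a b, ∀ x y : M, dist x y < δ → dist (φ (u, x)) (φ (u, y)) < d := by
  classical
  set K : Set (ℝ × M × M) :=
    {z | z.1 ∈ Icc a b ∧ d ≤ dist (φ (z.1, z.2.1)) (φ (z.1, z.2.2))} with hKdef
  have hKclosed : IsClosed K := by
    have : K = ((fun z : ℝ × M × M => z.1) ⁻¹' Icc a b) ∩
        {z : ℝ × M × M | d ≤ dist (φ (z.1, z.2.1)) (φ (z.1, z.2.2))} := rfl
    rw [this]
    refine IsClosed.inter (isClosed_Icc.preimage continuous_fst) ?_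
    refine isClosed_le continuous_const (Continuous.dist ?_ ?_)
    · exact hφ.1.comp (by fun_prop)
    · exact hφ.1.comp (by fun_prop)
  have hKcomp : IsCompact K :=
    IsCompact.of_isClosed_subset
      ((isCompact_Icc (a := a) (b := b)).prod (isCompact_univ.prod isCompact_univ))
      hKclosed (fun z hz => ⟨hz.1, mem_univ _, mem_univ _⟩)
  rcases eq_empty_or_nonempty K with hKe | hKne
  · refine ⟨1, one_pos, fun u hu x y _ => ?_⟩
    by_contra hcon
    have : (u, x, y) ∈ K := ⟨hu, le_of_not_gt hcon⟩
    simp [hKe] at this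
  · obtain ⟨z₀, hz₀K, hmin⟩ := hKcomp.exists_isMinOn hKne
      ((continuous_fst.comp continuous_snd).dist (continuous_snd.comp continuous_snd)).continuousOn
    refine ⟨dist z₀.2.1 z₀.2.2, ?_, ?_⟩
    · rcases eq_or_lt_of_le (dist_nonneg (x := z₀.2.1) (y := z₀.2.2)) with h | h
      · exfalso
        have := hz₀K.2
        rw [show z₀.2.1 = z₀.2.2 from dist_eq_zero.1 h.symm] at this
        simp at this; linarith
      · exact h
    · intro u hu x y hxy
      by_contra hcon
      have hmem : (u, x, y) ∈ K := ⟨hu, le_of_not_gt hcon⟩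
      have := hmin hmem
      simp only [IsMinOn, IsMinFilter] at this
      exact absurd hxy (not_lt.2 this)

lemma nc_flow_back (hφ : IsFlow φ) (t : ℝ) (x : M) : φ (-t, φ (t, x)) = x := by
  rw [← hφ.2.2, neg_add_cancel, hφ.2.1]

lemma nc_per_int (hφ : IsFlow φ) {x₀ : M} {T₀ : ℝ} (h : φ (T₀, x₀) = x₀) :
    ∀ n : ℤ, φ ((n : ℝ) * T₀, x₀) = x₀ := by
  have hneg : φ (-T₀, x₀) = x₀ := by
    conv_lhs => rw [← h]
    rw [nc_flow_back hφ]
  intro n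
  induction n using Int.induction_on with
  | zero => simpa using hφ.2.1 x₀
  | succ n ih =>
      push_cast
      push_cast at ih
      rw [add_mul, one_mul, add_comm, hφ.2.2, ih, h]
  | pred n ih =>
      push_cast
      push_cast at ih
      rw [sub_mul, one_mul, sub_eq_add_neg, add_comm, hφ.2.2, ih, hneg]

lemma nc_per_reduce (hφ : IsFlow φ) {x₀ : M} {T₀ : ℝ} (hpos : 0 < T₀) (h : φ (T₀, x₀) = x₀)
    (s : ℝ) : ∃ s' : ℝ, 0 ≤ s' ∧ s' < T₀ ∧ φ (s', x₀) = φ (s, x₀) := by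
  refine ⟨s - ⌊s / T₀⌋ * T₀, ?_, ?_, ?_⟩
  · have := Int.floor_le (s / T₀)
    have h2 : (⌊s / T₀⌋ : ℝ) * T₀ ≤ s / T₀ * T₀ := by
      apply mul_le_mul_of_nonneg_right this (le_of_lt hpos)
    rw [div_mul_cancel₀ s (ne_of_gt hpos)] at h2
    linarith
  · have := Int.lt_floor_add_one (s / T₀)
    have h2 : s / T₀ * T₀ < ((⌊s / T₀⌋ : ℝ) + 1) * T₀ := by
      apply mul_lt_mul_of_pos_right this hpos
    rw [div_mul_cancel₀ s (ne_of_gt hpos)] at h2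
    linarith
  · conv_rhs => rw [show s = (s - ⌊s / T₀⌋ * T₀) + (⌊s / T₀⌋ : ℝ) * T₀ by ring]
    rw [hφ.2.2, nc_per_int hφ h]

lemma nc_crit_nonempty (hφ : IsFlow φ) {Λ : Set M} (hΛ : IsCriticalElement φ Λ) :
    Λ.Nonempty := by
  rcases hΛ with ⟨p, _, rfl⟩ | ⟨x₀, T₀, _, _, _, rfl⟩
  · exact ⟨p, rfl⟩
  · exact ⟨x₀, ⟨0, hφ.2.1 x₀⟩⟩

lemma nc_approach_top (hφ : IsFlow φ) {Λ : Set M} (hΛ : IsCriticalElement φ Λ) {x : M}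
    (hx : Tendsto (fun t => infDist (φ (t, x)) Λ) atTop (nhds 0)) {p : M} (hp : p ∈ Λ)
    {δ : ℝ} (hδ : 0 < δ) (T : ℝ) : ∃ t > T, dist (φ (t, x)) p < δ := by
  rcases hΛ with ⟨p', _, rfl⟩ | ⟨x₀, T₀, hT₀, hper, _, rfl⟩
  · rcases hp with rfl
    have hev : ∀ᶠ t in atTop, infDist (φ (t, x)) {p} < δ :=
      (tendsto_order.1 hx).2 δ hδ
    obtain ⟨a, ha⟩ := hev.exists_forall_of_atTop
    refine ⟨max a T + 1, by linarith [le_max_right a T], ?_⟩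
    have := ha (max a T + 1) (by linarith [le_max_left a T])
    rwa [Metric.infDist_singleton] at this
  · -- periodic case
    obtain ⟨sp, hsp⟩ := hp
    simp only at hsp
    set B := |sp| + T₀ with hBdef
    obtain ⟨δ', hδ', hUC⟩ := nc_uc hφ hδ (-B) B
    have hev : ∀ᶠ t in atTop, infDist (φ (t, x)) (Set.range fun t => φ (t, x₀)) < δ' :=
      (tendsto_order.1 hx).2 δ' hδ'
    obtain ⟨a, ha⟩ := hev.exists_forall_of_atTop
    set t₁ := max a (T + B) + 1 with ht₁def
    have ht₁a : a ≤ t₁ := by linarith [le_max_left a (T + B)]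
    have ht₁T : T + B < t₁ := by linarith [le_max_right a (T + B)]
    have hlt := ha t₁ ht₁a
    have hne : (Set.range fun t => φ (t, x₀)).Nonempty := ⟨x₀, ⟨0, hφ.2.1 x₀⟩⟩
    obtain ⟨q, hqmem, hqd⟩ := (Metric.infDist_lt_iff hne).1 hlt
    obtain ⟨s, hs⟩ := hqmem
    simp only at hs
    obtain ⟨s', hs'0, hs'T, hs'eq⟩ := nc_per_reduce hφ hT₀ hper s
    have hq' : φ (s', x₀) = q := by rw [hs'eq, hs]
    have huB : sp - s' ∈ Icc (-B) B := by
      constructor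
      · linarith [neg_abs_le sp, hs'T.le]
      · linarith [le_abs_self sp, hs'0, hT₀]
    have hkey := hUC (sp - s') huB (φ (t₁, x)) q hqd
    refine ⟨t₁ + (sp - s'), ?_, ?_⟩
    · have : -B ≤ sp - s' := huB.1
      linarith
    · have e1 : φ (sp - s', φ (t₁, x)) = φ (t₁ + (sp - s'), x) := by
        rw [← hφ.2.2]; ring_nf
      have e2 : φ (sp - s', q) = p := by
        rw [← hq', ← hφ.2.2, sub_add_cancel, hsp]
      rwa [e1, e2] at hkey

lemma nc_approach_bot (hφ : IsFlow φ) {Λ : Set M} (hΛ : IsCriticalElement φ Λ) {x : M}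
    (hx : Tendsto (fun t => infDist (φ (t, x)) Λ) atBot (nhds 0)) {p : M} (hp : p ∈ Λ)
    {δ : ℝ} (hδ : 0 < δ) (T : ℝ) : ∃ t < T, dist (φ (t, x)) p < δ := by
  rcases hΛ with ⟨p', _, rfl⟩ | ⟨x₀, T₀, hT₀, hper, _, rfl⟩
  · rcases hp with rfl
    have hev : ∀ᶠ t in atBot, infDist (φ (t, x)) {p} < δ :=
      (tendsto_order.1 hx).2 δ hδ
    obtain ⟨a, ha⟩ := hev.exists_forall_of_atBot
    refine ⟨min a T - 1, by linarith [min_le_right a T], ?_⟩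
    have := ha (min a T - 1) (by linarith [min_le_left a T])
    rwa [Metric.infDist_singleton] at this
  · obtain ⟨sp, hsp⟩ := hp
    simp only at hsp
    set B := |sp| + T₀ with hBdef
    obtain ⟨δ', hδ', hUC⟩ := nc_uc hφ hδ (-B) B
    have hev : ∀ᶠ t in atBot, infDist (φ (t, x)) (Set.range fun t => φ (t, x₀)) < δ' :=
      (tendsto_order.1 hx).2 δ' hδ'
    obtain ⟨a, ha⟩ := hev.exists_forall_of_atBot
    set t₁ := min a (T - B) - 1 with ht₁def
    have ht₁a : t₁ ≤ a := by linarith [min_le_left a (T - B)]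
    have ht₁T : t₁ < T - B := by linarith [min_le_right a (T - B)]
    have hlt := ha t₁ ht₁a
    have hne : (Set.range fun t => φ (t, x₀)).Nonempty := ⟨x₀, ⟨0, hφ.2.1 x₀⟩⟩
    obtain ⟨q, hqmem, hqd⟩ := (Metric.infDist_lt_iff hne).1 hlt
    obtain ⟨s, hs⟩ := hqmem
    simp only at hs
    obtain ⟨s', hs'0, hs'T, hs'eq⟩ := nc_per_reduce hφ hT₀ hper s
    have hq' : φ (s', x₀) = q := by rw [hs'eq, hs]
    have huB : sp - s' ∈ Icc (-B) B := by
      constructor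
      · linarith [neg_abs_le sp, hs'T.le]
      · linarith [le_abs_self sp, hs'0, hT₀]
    have hkey := hUC (sp - s') huB (φ (t₁, x)) q hqd
    refine ⟨t₁ + (sp - s'), ?_, ?_⟩
    · have : sp - s' ≤ B := huB.2
      linarith
    · have e1 : φ (sp - s', φ (t₁, x)) = φ (t₁ + (sp - s'), x) := by
        rw [← hφ.2.2]; ring_nf
      have e2 : φ (sp - s', q) = p := by
        rw [← hq', ← hφ.2.2, sub_add_cancel, hsp]
      rwa [e1, e2] at hkey


lemma nc_emod_toNat_lt (k : ℕ) (hk : 0 < k) (i : ℤ) : (i % (k:ℤ)).toNat < k := by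
  have h0 : (0:ℤ) < (k:ℤ) := by exact_mod_cast hk
  have h1 := Int.emod_nonneg i (by omega : (k:ℤ) ≠ 0)
  have h2 := Int.emod_lt_of_pos i h0
  omega

lemma nc_emod_succ (k : ℕ) (hk : 0 < k) (i : ℤ) :
    ((i+1) % (k:ℤ)).toNat = ((i % (k:ℤ)).toNat + 1) % k := by
  have h0 : (0:ℤ) < (k:ℤ) := by exact_mod_cast hk
  have h1 : 0 ≤ i % (k:ℤ) := Int.emod_nonneg i (by omega)
  have h2 : i % (k:ℤ) < k := Int.emod_lt_of_pos i h0
  have e1 : (i + 1) % (k:ℤ) = (i % k + 1) % k := by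
    conv_lhs => rw [show i + 1 = i % k + 1 + k * (i / k) by linarith [Int.mul_ediv_add_emod i (k:ℤ)]]
    rw [Int.add_mul_emod_self_left]
  set r : ℕ := (i % (k:ℤ)).toNat with hrdef
  have hr : i % (k:ℤ) = (r:ℤ) := by simp [hrdef, Int.toNat_of_nonneg h1]
  rcases lt_or_eq_of_le (by omega : i % (k:ℤ) + 1 ≤ k) with h | h
  · rw [e1, Int.emod_eq_of_lt (by omega) h, hr]
    have hrk : r + 1 < k := by exact_mod_cast hr ▸ h
    rw [Nat.mod_eq_of_lt hrk]
    exact_mod_cast rfl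
  · rw [e1, h, Int.emod_self]
    have hrk : r + 1 = k := by omega
    rw [hrk, Nat.mod_self]
    rfl


end NCAux

set_option maxHeartbeats 1000000 in
/-- a flow with the oriented shadowing property and finitely many
critical elements as nonwandering set has no cycles. -/
theorem no_cycles {M : Type*} [MetricSpace M] [CompactSpace M]
    (φ : ℝ × M → M) (hφ : IsFlow φ) (hsh : OrientedShadowing φ)
    (n : ℕ) (C : Fin n → Set M) (hC : ∀ i, IsCriticalElement φ (C i))
    (hΩ : {x | IsNonWandering φ x} = ⋃ i, C i) :
    ¬ ∃ (k : ℕ) (_ : 1 ≤ k) (Λ : Fin (k + 1) → Set M),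
      (∀ i, IsCriticalElement φ (Λ i)) ∧ Λ (Fin.last k) = Λ 0 ∧
      ∀ i : Fin k, ∃ x : M, ¬ IsNonWandering φ x ∧
        Tendsto (fun t => Metric.infDist (φ (t, x)) (Λ i.castSucc)) atBot (nhds 0) ∧
        Tendsto (fun t => Metric.infDist (φ (t, x)) (Λ i.succ)) atTop (nhds 0) := by

  rintro ⟨k, hk, Λ, hcrit, hloop, hedge⟩
  have hk0 : (0:ℤ) < (k:ℤ) := by exact_mod_cast hk
  choose xe hxw hxbot hxtop using hedge
  choose q hq using fun j : Fin (k+1) => nc_crit_nonempty hφ (hcrit j)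
  set i0 : Fin k := ⟨0, hk⟩ with hi0def
  -- negation of nonwandering for the edge-0 point
  have hnw := hxw i0
  unfold IsNonWandering at hnw
  push_neg at hnw
  obtain ⟨V, hVopen, hxV, T, hTpos, hnoret⟩ := hnw
  obtain ⟨ε, hε, hball⟩ := Metric.isOpen_iff.1 hVopen _ hxV
  obtain ⟨d, hd, hshad⟩ := hsh ε hε
  obtain ⟨δ, hδ, hUC⟩ := nc_uc hφ hd 0 1
  -- choose connection times per edge
  have hSex : ∀ r : Fin k, ∃ S : ℝ, 1 ≤ S ∧ dist (φ (-S, xe r)) (q r.castSucc) < δ/2 := by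
    intro r
    obtain ⟨t, ht, hdist⟩ := nc_approach_bot hφ (hcrit r.castSucc) (hxbot r)
      (hq r.castSucc) (half_pos hδ) (-1)
    exact ⟨-t, by linarith, by rwa [neg_neg]⟩
  set nxt : Fin k → Fin k := fun r => ⟨(r.val + 1) % k, Nat.mod_lt _ hk⟩ with hnxtdef
  have hmemsucc : ∀ r : Fin k, q (nxt r).castSucc ∈ Λ r.succ := by
    intro r
    by_cases hcase : (r : ℕ) + 1 < k
    · have he : (nxt r).castSucc = r.succ := by
        apply Fin.ext
        simp [hnxtdef, Fin.castSucc, Fin.succ, Nat.mod_eq_of_lt hcase]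
      rw [he]; exact hq _
    · have h1 : (r:ℕ) + 1 = k := by omega
      have h2 : (nxt r).castSucc = (0 : Fin (k+1)) := by
        apply Fin.ext
        simp [hnxtdef, Fin.castSucc, h1]
      have h3 : r.succ = Fin.last k := by
        apply Fin.ext; simp [Fin.succ, Fin.last, h1]
      rw [h3, hloop, h2]
      exact hq 0
  have hTex : ∀ r : Fin k, ∃ Tr : ℝ, 1 ≤ Tr ∧ dist (φ (Tr, xe r)) (q (nxt r).castSucc) < δ/2 := by
    intro r
    obtain ⟨t, ht, hdist⟩ := nc_approach_top hφ (hcrit r.succ) (hxtop r)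
      (hmemsucc r) (half_pos hδ) 1
    exact ⟨t, le_of_lt ht, hdist⟩
  choose S hS1 hS2 using hSex
  choose Tt hT1 hT2 using hTex
  -- integer-indexed (k-periodic) data
  set cls : ℤ → Fin k := fun i => ⟨(i % (k:ℤ)).toNat, nc_emod_toNat_lt k hk i⟩ with hclsdef
  have hclssucc : ∀ i : ℤ, cls (i+1) = nxt (cls i) := by
    intro i
    apply Fin.ext
    exact nc_emod_succ k hk i
  set Xe : ℤ → M := fun i => xe (cls i) with hXedef
  set Si : ℤ → ℝ := fun i => S (cls i) with hSidef
  set Ti : ℤ → ℝ := fun i => Tt (cls i) with hTidef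
  have hSi1 : ∀ i : ℤ, 1 ≤ Si i := fun i => hS1 (cls i)
  have hTi1 : ∀ i : ℤ, 1 ≤ Ti i := fun i => hT1 (cls i)
  -- jump estimate
  have hjmp : ∀ i : ℤ, dist (φ (-(Si (i+1)), Xe (i+1))) (φ (Ti i, Xe i)) < δ := by
    intro i
    calc dist (φ (-(Si (i+1)), Xe (i+1))) (φ (Ti i, Xe i))
        ≤ dist (φ (-(Si (i+1)), Xe (i+1))) (q (nxt (cls i)).castSucc)
          + dist (φ (Ti i, Xe i)) (q (nxt (cls i)).castSucc) := dist_triangle_right _ _ _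
      _ < δ/2 + δ/2 := by
          apply add_lt_add
          · rw [← hclssucc i]; exact hS2 (cls (i+1))
          · exact hT2 (cls i)
      _ = δ := by ring
  -- segment length data and breakpoints
  set A : ℕ → ℝ := fun r => ∑ j ∈ Finset.range r, (Ti (j:ℤ) + Si ((j:ℤ)+1)) with hAdef
  set P : ℝ := A k with hPdef
  set m : ℤ → ℝ := fun i => ((i / (k:ℤ) : ℤ) : ℝ) * P + A ((i % (k:ℤ)).toNat) with hmdef
  have hstep2 : ∀ j : ℤ, 2 ≤ Ti j + Si (j+1) := fun j => by linarith [hTi1 j, hSi1 (j+1)]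
  have hPge : 2 * (k:ℝ) ≤ P := by
    rw [hPdef, hAdef]
    calc 2*(k:ℝ) = ∑ _j ∈ Finset.range k, (2:ℝ) := by
          rw [Finset.sum_const, Finset.card_range, nsmul_eq_mul, mul_comm]
      _ ≤ _ := Finset.sum_le_sum (fun j _ => hstep2 j)
  have hPpos : 0 < P := by
    have : (1:ℝ) ≤ (k:ℝ) := by exact_mod_cast hk
    linarith
  have hclsnat : ∀ i : ℤ, cls i = cls ((i % (k:ℤ)).toNat : ℤ) := by
    intro i
    have h1 : (((i % (k:ℤ)).toNat : ℤ)) % (k:ℤ) = ((i % (k:ℤ)).toNat : ℤ) :=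
      Int.emod_eq_of_lt (Int.natCast_nonneg _) (by exact_mod_cast nc_emod_toNat_lt k hk i)
    apply Fin.ext
    show (i % (k:ℤ)).toNat = ((((i % (k:ℤ)).toNat : ℤ)) % (k:ℤ)).toNat
    rw [h1, Int.toNat_natCast]
  have hm_rec : ∀ i : ℤ, m (i+1) = m i + (Ti i + Si (i+1)) := by
    intro i
    set qd : ℤ := i / (k:ℤ) with hqddef
    set r : ℕ := (i % (k:ℤ)).toNat with hrdef
    have hrnn : 0 ≤ i % (k:ℤ) := Int.emod_nonneg i (by omega)
    have hr : i % (k:ℤ) = (r:ℤ) := by rw [hrdef]; simp [Int.toNat_of_nonneg hrnn]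
    have hrk : r < k := nc_emod_toNat_lt k hk i
    have hieq : i = (k:ℤ) * qd + r := by rw [hqddef, ← hr]; linarith [Int.mul_ediv_add_emod i (k:ℤ)]
    have hclseq : cls i = cls (r:ℤ) := by rw [hrdef]; exact hclsnat i
    have hclseq' : cls (i+1) = cls ((r:ℤ)+1) := by
      rw [hclssucc i, hclssucc (r:ℤ), hclseq]
    have hTieq : Ti i = Ti (r:ℤ) := congrArg Tt hclseq
    have hSieq : Si (i+1) = Si ((r:ℤ)+1) := congrArg S hclseq'
    have hAsucc : A (r+1) = A r + (Ti (r:ℤ) + Si ((r:ℤ)+1)) := by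
      rw [hAdef]; exact Finset.sum_range_succ _ r
    have hmodsucc : ((i+1) % (k:ℤ)).toNat = (r + 1) % k := by
      rw [nc_emod_succ k hk i, hrdef]
    by_cases hcase : r + 1 < k
    · have h1 : ((i+1) % (k:ℤ)).toNat = r + 1 := by rw [hmodsucc, Nat.mod_eq_of_lt hcase]
      have h2 : (i+1) % (k:ℤ) = ((r:ℕ):ℤ) + 1 := by
        have := Int.emod_nonneg (i+1) (by omega : (k:ℤ) ≠ 0)
        omega
      have h3 : (i+1) / (k:ℤ) = qd := by
        have hdm := Int.mul_ediv_add_emod (i+1) (k:ℤ)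
        have : (k:ℤ) * ((i+1) / (k:ℤ)) = (k:ℤ) * qd := by
          rw [h2] at hdm; push_cast at hdm hieq ⊢; linarith
        exact mul_left_cancel₀ (by omega : (k:ℤ) ≠ 0) this
      simp only [hmdef]
      rw [h3, h1, ← hqddef, ← hrdef, hAsucc, hTieq, hSieq]
      ring
    · have hc : r + 1 = k := by omega
      have h1 : ((i+1) % (k:ℤ)).toNat = 0 := by rw [hmodsucc, hc, Nat.mod_self]
      have h2 : (i+1) % (k:ℤ) = 0 := by
        have := Int.emod_nonneg (i+1) (by omega : (k:ℤ) ≠ 0)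
        omega
      have h3 : (i+1) / (k:ℤ) = qd + 1 := by
        have h4 := Int.mul_ediv_add_emod (i+1) (k:ℤ)
        rw [h2] at h4
        have hcz : ((r:ℤ)+1) = (k:ℤ) := by exact_mod_cast hc
        have : (k:ℤ) * ((i+1) / (k:ℤ)) = (k:ℤ) * (qd + 1) := by
          rw [mul_add, mul_one]; linarith
        exact mul_left_cancel₀ (by omega : (k:ℤ) ≠ 0) this
      have hAk : A k = A r + (Ti (r:ℤ) + Si ((r:ℤ)+1)) := by rw [← hc, hAsucc]
      have hA0 : A 0 = 0 := by simp [hAdef]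
      simp only [hmdef]
      rw [h3, h1, ← hqddef, ← hrdef, hA0, hTieq, hSieq, hPdef, hAk]
      push_cast
      ring
  clear_value Si Ti A P m
  -- breakpoints
  set b : ℤ → ℝ := fun i => m i - Si i with hbdef
  clear_value b
  have hb_gap : ∀ i : ℤ, b i + 2 ≤ b (i+1) := by
    intro i
    simp only [hbdef]
    rw [hm_rec i]
    linarith [hTi1 i, hSi1 i]
  have hbmono : StrictMono b := strictMono_int_of_lt_succ (fun i => by linarith [hb_gap i])
  have hb_eq : ∀ i : ℤ, b (i+1) = m i + Ti i := by
    intro i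
    simp only [hbdef]
    rw [hm_rec i]
    ring
  have hb_growth_pos : ∀ n : ℕ, b 0 + 2*(n:ℝ) ≤ b (n:ℤ) := by
    intro n; induction n with
    | zero => simp
    | succ p ih =>
        rw [show ((p+1:ℕ):ℤ) = (p:ℤ)+1 by push_cast; ring,
          show ((p+1:ℕ):ℝ) = (p:ℝ)+1 by push_cast; ring]
        linarith [hb_gap (p:ℤ), ih]
  have hb_growth_neg : ∀ n : ℕ, b (-(n:ℤ)) ≤ b 0 - 2*(n:ℝ) := by
    intro n; induction n with
    | zero => simp
    | succ p ih =>
        have hg := hb_gap (-(p:ℤ)-1)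
        have he : (-(p:ℤ)-1) + 1 = -(p:ℤ) := by ring
        rw [he] at hg
        rw [show (-((p+1:ℕ):ℤ)) = -(p:ℤ)-1 by push_cast; ring,
          show ((p+1:ℕ):ℝ) = (p:ℝ)+1 by push_cast; ring]
        linarith
  -- segment index
  have hsegex : ∀ t : ℝ, ∃ i : ℤ, b i ≤ t ∧ t < b (i+1) := by
    intro t
    have hbdd : ∃ Bd : ℤ, ∀ z : ℤ, b z ≤ t → z ≤ Bd := by
      refine ⟨max 0 ⌈(t - b 0)/2⌉, fun z hz => ?_⟩
      by_contra hcon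
      push_neg at hcon
      have hz0 : 0 ≤ z := le_trans (le_max_left _ _) hcon.le
      have hzc : ⌈(t - b 0)/2⌉ < z := lt_of_le_of_lt (le_max_right _ _) hcon
      have h1 := hb_growth_pos z.toNat
      rw [Int.toNat_of_nonneg hz0] at h1
      have hzn : ((z.toNat:ℕ):ℝ) = ((z:ℤ):ℝ) := by
        exact_mod_cast Int.toNat_of_nonneg hz0
      rw [hzn] at h1
      have h2 : (t - b 0)/2 ≤ (⌈(t - b 0)/2⌉:ℝ) := Int.le_ceil _
      have h3 : ((⌈(t - b 0)/2⌉:ℤ):ℝ) + 1 ≤ ((z:ℤ):ℝ) := by exact_mod_cast hzc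
      linarith
    have hne : ∃ z : ℤ, b z ≤ t := by
      obtain ⟨nn, hnn⟩ := exists_nat_gt ((b 0 - t)/2)
      refine ⟨-(nn:ℤ), ?_⟩
      have := hb_growth_neg nn
      linarith
    obtain ⟨ub, hub1, hub2⟩ := Int.exists_greatest_of_bdd hbdd hne
    refine ⟨ub, hub1, ?_⟩
    by_contra hcon
    push_neg at hcon
    have := hub2 (ub+1) hcon
    omega
  choose seg hseg1 hseg2 using hsegex
  have hsegu : ∀ (t : ℝ) (i : ℤ), b i ≤ t → t < b (i+1) → seg t = i := by
    intro t i h1 h2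
    rcases lt_trichotomy (seg t) i with h | h | h
    · exfalso
      have : seg t + 1 ≤ i := by omega
      have := hbmono.monotone this
      have := hseg2 t
      linarith
    · exact h
    · exfalso
      have : i + 1 ≤ seg t := by omega
      have := hbmono.monotone this
      have := hseg1 t
      linarith
  set ξ : ℝ → M := fun t => φ (t - m (seg t), Xe (seg t)) with hξdef
  have hsegm : ∀ i : ℤ, seg (m i) = i := by
    intro i
    apply hsegu
    · simp only [hbdef]; linarith [hSi1 i]
    · rw [hb_eq i]; linarith [hTi1 i]
  have hξm : ∀ i : ℤ, ξ (m i) = Xe i := by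
    intro i
    show φ (m i - m (seg (m i)), Xe (seg (m i))) = Xe i
    rw [hsegm i, sub_self, hφ.2.1]
  -- pseudotrajectory property
  have hpseudo : IsPseudo φ d ξ := by
    intro t s hs
    obtain ⟨hs0, hs1⟩ := hs
    have h1 : b (seg t) ≤ t := hseg1 t
    have h2 : t < b (seg t + 1) := hseg2 t
    by_cases hcase : t + s < b (seg t + 1)
    · have hseq : seg (t+s) = seg t := hsegu (t+s) (seg t) (by linarith) hcase
      have he : ξ (t+s) = φ (s, ξ t) := by
        show φ (t + s - m (seg (t+s)), Xe (seg (t+s))) = φ (s, φ (t - m (seg t), Xe (seg t)))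
        rw [hseq, ← hφ.2.2, show s + (t - m (seg t)) = t + s - m (seg t) by ring]
      rw [he, dist_self]; exact hd
    · push_neg at hcase
      have hu0 : 0 ≤ t + s - b (seg t + 1) := by linarith
      have hu1 : t + s - b (seg t + 1) ≤ 1 := by linarith
      have hseq : seg (t+s) = seg t + 1 := by
        apply hsegu
        · exact hcase
        · have := hb_gap (seg t + 1); linarith
      have hcm : b (seg t + 1) = m (seg t + 1) - Si (seg t + 1) := by simp only [hbdef]
      have e1 : ξ (t+s) = φ (t + s - b (seg t + 1), φ (-(Si (seg t + 1)), Xe (seg t + 1))) := by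
        show φ (t + s - m (seg (t+s)), Xe (seg (t+s))) = _
        rw [hseq, ← hφ.2.2,
          show (t + s - b (seg t + 1)) + -(Si (seg t + 1)) = t + s - m (seg t + 1) by
            rw [hcm]; ring]
      have e2 : φ (s, ξ t) = φ (t + s - b (seg t + 1), φ (Ti (seg t), Xe (seg t))) := by
        show φ (s, φ (t - m (seg t), Xe (seg t))) = _
        rw [← hφ.2.2, ← hφ.2.2,
          show s + (t - m (seg t)) = (t + s - b (seg t + 1)) + Ti (seg t) by
            rw [hb_eq (seg t)]; ring]
      rw [e1, e2]
      exact hUC _ ⟨hu0, hu1⟩ _ _ (hjmp (seg t))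
  -- shadowing
  obtain ⟨z, h, ⟨hhcont, hhbij, hhmono⟩, hclose⟩ := hshad ξ hpseudo
  have hm0 : m 0 = 0 := by
    simp only [hmdef]
    rw [Int.zero_ediv, Int.zero_emod]
    simp [hAdef]
  have hXe0 : Xe 0 = xe i0 := by
    simp only [hXedef]
    congr 1
  have hξ0 : ξ 0 = xe i0 := by
    have := hξm 0
    rw [hm0, hXe0] at this
    exact this
  -- the recurrence times
  obtain ⟨a, ha⟩ := hhbij.2 (T + h 0 + 1)
  obtain ⟨nn, hnn⟩ := exists_nat_gt (a / P)
  have hnP : a < (nn:ℝ) * P := by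
    rw [div_lt_iff₀ hPpos] at hnn
    linarith
  have hmnk : m ((nn:ℤ) * (k:ℤ)) = (nn:ℝ) * P := by
    simp only [hmdef]
    rw [Int.mul_ediv_cancel _ (by omega : (k:ℤ) ≠ 0), Int.mul_emod_left]
    simp [hAdef]
  have hclsnk : cls ((nn:ℤ) * (k:ℤ)) = i0 := by
    apply Fin.ext
    show (((nn:ℤ) * (k:ℤ)) % (k:ℤ)).toNat = 0
    rw [Int.mul_emod_left]
    rfl
  have hξτ : ξ (m ((nn:ℤ) * (k:ℤ))) = xe i0 := by
    rw [hξm]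
    simp only [hXedef]
    rw [hclsnk]
  have hhτ : T + h 0 + 1 < h (m ((nn:ℤ) * (k:ℤ))) := by
    rw [← ha]
    apply hhmono
    rw [hmnk]
    exact hnP
  set y : M := φ (h 0, z) with hydef
  have hyV : y ∈ V := by
    apply hball
    have := hclose 0
    rw [hξ0] at this
    rw [mem_ball, dist_comm]
    exact this
  have hφty : φ (h (m ((nn:ℤ) * (k:ℤ))) - h 0, y) = φ (h (m ((nn:ℤ) * (k:ℤ))), z) := by
    rw [hydef, ← hφ.2.2,
      show h (m ((nn:ℤ) * (k:ℤ))) - h 0 + h 0 = h (m ((nn:ℤ) * (k:ℤ))) by ring]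
  have hφtyV : φ (h (m ((nn:ℤ) * (k:ℤ))) - h 0, y) ∈ V := by
    rw [hφty]
    apply hball
    have := hclose (m ((nn:ℤ) * (k:ℤ)))
    rw [hξτ] at this
    rw [mem_ball, dist_comm]
    exact this
  exact hnoret (h (m ((nn:ℤ) * (k:ℤ))) - h 0) (by linarith) y hyV hφtyV
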